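/- (Universality of weight-tied, input-injected deep networks.) Let k ≥ 1 and let d₁, …, d_{k+1} be natural numbers. Consider a k-layer network defined by z² = σ¹(W¹ x + b¹) and z^{i+1} = σ^{i}(W^{i} z^{i} + b^{i}) for i = 2, …, k, where x ∈ ℝ^{d₁}, W^{i} ∈ ℝ^{d_{i+1} × d_i}, b^{i} ∈ ℝ^{d_{i+1}}, and σ^{i} : ℝ^{d_{i+1}} → ℝ^{d_{i+1}} are arbitrary maps. Let V = ℝ^{d₂} × ⋯ × ℝ^{d_{k+1}}. Then there exist a linear map W_z : V → V, a linear map W_x : ℝ^{d₁} → V, a vector b̃ ∈ V, and a map σ : V → V (namely the block-shift matrix with blocks W², …, W^{k} on the subdiagonal, W_x injecting W¹ x into the first block, b̃ the concatenation of b¹, …, b^{k}, and σ the blockwise application of σ¹, …, σ^{k}), such that for every x ∈ ℝ^{d₁} and every initialization z̃^{[1]} ∈ V, the k-th iterate of the weight-tied, input-injected update z̃^{[i+1]} = σ(W_z z̃^{[i]} + W_x x + b̃) equals (z², z³, …, z^{k+1}); in particular its last block equals the original network's output z^{k+1}. -/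
import Mathlib


/-- The original `k`-layer network: `origNet … 0 = z² = σ¹(W¹ x + b¹)` and
`origNet … (i+1) = z^{i+3} = σ^{i+2}(W^{i+2} z^{i+2} + b^{i+2})`; in general
`origNet … i` is the hidden layer `z^{i+2}` of the paper's notation. -/
def origNet (dims : ℕ → ℕ)
    (W : (i : ℕ) → Matrix (Fin (dims (i + 1))) (Fin (dims i)) ℝ)
    (b : (i : ℕ) → Fin (dims (i + 1)) → ℝ)
    (σ : (i : ℕ) → (Fin (dims (i + 1)) → ℝ) → (Fin (dims (i + 1)) → ℝ))
    (x : Fin (dims 0) → ℝ) : (i : ℕ) → Fin (dims (i + 1)) → ℝ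
  | 0 => σ 0 ((W 0).mulVec x + b 0)
  | (i + 1) => σ (i + 1) ((W (i + 1)).mulVec (origNet dims W b σ x i) + b (i + 1))

/-- (Universality of weight-tied, input-injected deep networks.) Any
traditional `k`-layer network `z² = σ¹(W¹x + b¹)`,
`z^{i+1} = σ^i(W^i z^i + b^i)` can be represented by a weight-tied,
input-injected network on `V = ℝ^{d₂} × ⋯ × ℝ^{d_{k+1}}`: there exist linear
maps `W_z : V →ₗ V`, `W_x : ℝ^{d₁} →ₗ V`, a bias `b̃ ∈ V`, and a map
`σ : V → V` such that for every input `x` and every initialization `z̃^{[1]}`,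
the `k`-th iterate of `z̃ ↦ σ(W_z z̃ + W_x x + b̃)` equals `(z², …, z^{k+1})`;
in particular its last block equals the original output `z^{k+1}`. -/

def bigWz (k : ℕ) (dims : ℕ → ℕ)
    (W : (i : ℕ) → Matrix (Fin (dims (i + 1))) (Fin (dims i)) ℝ) :
    ((i : Fin k) → Fin (dims (i.1 + 1)) → ℝ) →ₗ[ℝ]
    ((i : Fin k) → Fin (dims (i.1 + 1)) → ℝ) where
  toFun v i := match i with
    | ⟨0, _⟩ => 0
    | ⟨j+1, h⟩ => (W (j+1)).mulVec (v ⟨j, by omega⟩)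
  map_add' u v := by
    funext i
    rcases i with ⟨_ | j, h⟩ <;> simp [Matrix.mulVec_add]
  map_smul' c v := by
    funext i
    rcases i with ⟨_ | j, h⟩ <;> simp [Matrix.mulVec_smul]

def bigWx (k : ℕ) (dims : ℕ → ℕ)
    (W : (i : ℕ) → Matrix (Fin (dims (i + 1))) (Fin (dims i)) ℝ) :
    (Fin (dims 0) → ℝ) →ₗ[ℝ] ((i : Fin k) → Fin (dims (i.1 + 1)) → ℝ) where
  toFun x i := match i with
    | ⟨0, _⟩ => (W 0).mulVec x
    | ⟨j+1, h⟩ => 0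
  map_add' u v := by
    funext i
    rcases i with ⟨_ | j, h⟩ <;> simp [Matrix.mulVec_add]
  map_smul' c v := by
    funext i
    rcases i with ⟨_ | j, h⟩ <;> simp [Matrix.mulVec_smul]

theorem weight_tied_universality (k : ℕ) (hk : 1 ≤ k) (dims : ℕ → ℕ)
    (W : (i : ℕ) → Matrix (Fin (dims (i + 1))) (Fin (dims i)) ℝ)
    (b : (i : ℕ) → Fin (dims (i + 1)) → ℝ)
    (σ : (i : ℕ) → (Fin (dims (i + 1)) → ℝ) → (Fin (dims (i + 1)) → ℝ)) :
    ∃ (Wz : ((i : Fin k) → Fin (dims (i.1 + 1)) → ℝ) →ₗ[ℝ]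
            ((i : Fin k) → Fin (dims (i.1 + 1)) → ℝ))
      (Wx : (Fin (dims 0) → ℝ) →ₗ[ℝ] ((i : Fin k) → Fin (dims (i.1 + 1)) → ℝ))
      (btilde : (i : Fin k) → Fin (dims (i.1 + 1)) → ℝ)
      (σbig : ((i : Fin k) → Fin (dims (i.1 + 1)) → ℝ) →
              ((i : Fin k) → Fin (dims (i.1 + 1)) → ℝ)),
      ∀ (x : Fin (dims 0) → ℝ) (zinit : (i : Fin k) → Fin (dims (i.1 + 1)) → ℝ),
        (fun v => σbig (Wz v + Wx x + btilde))^[k] zinit =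
          (fun i : Fin k => origNet dims W b σ x i.1) ∧
        ((fun v => σbig (Wz v + Wx x + btilde))^[k] zinit) ⟨k - 1, by omega⟩ =
          origNet dims W b σ x (k - 1) := by
  refine ⟨bigWz k dims W, bigWx k dims W, fun i => b i.1,
    fun v i => σ i.1 (v i), ?_⟩
  intro x zinit
  have key : ∀ m, m ≤ k → ∀ i : Fin k, i.1 < m →
      ((fun (v : (i : Fin k) → Fin (dims (i.1 + 1)) → ℝ) => (fun i : Fin k => σ i.1
          ((bigWz k dims W v + bigWx k dims W x + fun i : Fin k => b i.1) i)))^[m]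
        zinit) i = origNet dims W b σ x i.1 := by
    intro m
    induction m with
    | zero => intro _ i hi; omega
    | succ m ih =>
      intro hm i hi
      rw [Function.iterate_succ_apply']
      rcases i with ⟨_ | j, h⟩
      · show σ 0 (0 + (W 0).mulVec x + b 0) = _
        simp [origNet]
      · have hj : j < m := Nat.lt_of_succ_lt_succ hi
        have hrec := ih (by omega) ⟨j, by omega⟩ hj
        show σ (j+1) ((W (j+1)).mulVec _ + 0 + b (j+1)) = _
        rw [hrec]
        simp [origNet]
  have h1 := key k le_rfl
  constructor
  · funext i
    exact h1 i i.2
  · exact h1 ⟨k - 1, by omega⟩ (by omega)
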